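/- Let F be a tower of homogeneous forms in k[x_1,...,x_n] of degrees d_1,...,d_h with maximum degree d. If the polarized tower F̃ is (2^d·A, B, t)-regular, then F is (A, B, t)-regular. -/

import Mathlib

open MvPolynomial

/-- `f` is a sum of `r` products of forms of positive degrees summing to `d`. -/
def SRankLE {k : Type*} [Field k] {σ : Type*} (f : MvPolynomial σ k) (d r : ℕ) : Prop :=
  ∃ g h : Fin r → MvPolynomial σ k,
    (∀ i, ∃ a b : ℕ, 0 < a ∧ 0 < b ∧ a + b = d ∧
      (g i).IsHomogeneous a ∧ (h i).IsHomogeneous b) ∧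
    f = ∑ i, g i * h i

/-- Relative rank at most `r` on the ideal `I`. -/
def SRankRelLE {k : Type*} [Field k] {σ : Type*} (I : Ideal (MvPolynomial σ k))
    (f : MvPolynomial σ k) (d r : ℕ) : Prop :=
  ∃ q ∈ I, q.IsHomogeneous d ∧ SRankLE (f + q) d r

/-- Every nonzero linear combination of the collection `F` has relative rank `> r`
on the ideal `I`. -/
def CollRegularGT {k : Type*} [Field k] {σ ι : Type*} [Fintype ι]
    (I : Ideal (MvPolynomial σ k)) (F : ι → MvPolynomial σ k) (d r : ℕ) : Prop :=
  ∀ a : ι → k, a ≠ 0 → ¬ SRankRelLE I (∑ j, C (a j) * F j) d r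

/-- A tower with layers indexed by `ι i` of common degree `deg i` is `(A,B,t)`-regular:
every layer has relative rank `> A·(mᵢ + ⋯ + m_h + t)^B` on the ideal generated by the
earlier layers. -/
def TowerRegular {k : Type*} [Field k] {σ : Type*} {h : ℕ} (ι : Fin h → Type)
    [∀ i, Fintype (ι i)] (deg : Fin h → ℕ)
    (F : (i : Fin h) → ι i → MvPolynomial σ k) (A B t : ℕ) : Prop :=
  ∀ i : Fin h,
    CollRegularGT (Ideal.span {p | ∃ (i' : Fin h) (j : ι i'), i' < i ∧ p = F i' j})
      (F i) (deg i)
      (A * ((∑ i' ∈ Finset.univ.filter (fun i' => i ≤ i'), Fintype.card (ι i')) + t) ^ B)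

/-- The polarization of a form `f` of degree `e` with respect to a subset
`E ⊆ [d]` with `|E| = e`: substitute `xⱼ ↦ ∑_{s ∈ [d]} v_s(j)` and take the component
which is multilinear in the slots of `E` (degree 1 in each `v_s`, `s ∈ E`, degree 0 in
the others), i.e. `f̃((v_s)_{s ∈ E}) = ∇_{v_{s₁}} ⋯ ∇_{v_{s_e}} f(0)`. -/
noncomputable def polarize {k : Type*} [Field k] {n : ℕ} (d : ℕ) (E : Finset (Fin d))
    (f : MvPolynomial (Fin n) k) : MvPolynomial (Fin d × Fin n) k :=
  weightedHomogeneousComponent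
    (fun p : Fin d × Fin n => (Pi.single p.1 1 : Fin d → ℕ))
    (fun s => if s ∈ E then 1 else 0)
    (aeval (fun j : Fin n => ∑ s : Fin d, X (s, j)) f)

namespace PolarizeAux

variable {k : Type*} [Field k] {n d : ℕ}

/-- indicator function of a finset -/
def chi {d : ℕ} (E : Finset (Fin d)) : Fin d → ℕ := fun s => if s ∈ E then 1 else 0

/-- the weight function used in polarization -/
def pw (d n : ℕ) : Fin d × Fin n → Fin d → ℕ := fun p => Pi.single p.1 1

lemma polarize_def (E : Finset (Fin d)) (f : MvPolynomial (Fin n) k) :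
    polarize d E f = weightedHomogeneousComponent (pw d n) (chi E)
      (aeval (fun j : Fin n => ∑ s : Fin d, X (s, j)) f) := rfl

lemma chi_injective : Function.Injective (chi (d := d)) := by
  intro E1 E2 hch
  ext s
  have h := congrFun hch s
  simp only [chi] at h
  by_cases h1 : s ∈ E1 <;> by_cases h2 : s ∈ E2 <;> simp_all

lemma chi_add_sdiff {E1 E : Finset (Fin d)} (h : E1 ⊆ E) :
    chi E1 + chi (E \ E1) = chi E := by
  funext s
  simp only [Pi.add_apply, chi, Finset.mem_sdiff]
  by_cases h1 : s ∈ E1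
  · simp [h1, h h1]
  · by_cases h2 : s ∈ E <;> simp [h1, h2]

lemma chi_decomp {u v : Fin d → ℕ} {E : Finset (Fin d)} (h : u + v = chi E) :
    ∃ E1, E1 ⊆ E ∧ u = chi E1 ∧ v = chi (E \ E1) := by
  classical
  refine ⟨E.filter (fun s => u s = 1), Finset.filter_subset _ _, ?_, ?_⟩
  · funext s
    have hs := congrFun h s
    simp only [Pi.add_apply, chi] at hs ⊢
    by_cases hE : s ∈ E
    · rw [if_pos hE] at hs
      by_cases hu : u s = 1
      · simp [Finset.mem_filter, hu, hE]
      · have h0 : u s = 0 := by omega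
        simp [Finset.mem_filter, hu, hE, h0]
    · rw [if_neg hE] at hs
      have h0 : u s = 0 := by omega
      simp [Finset.mem_filter, hE, h0]
  · funext s
    have hs := congrFun h s
    simp only [Pi.add_apply, chi] at hs ⊢
    by_cases hE : s ∈ E
    · rw [if_pos hE] at hs
      by_cases hu : u s = 1
      · have h0 : v s = 0 := by omega
        simp [Finset.mem_sdiff, Finset.mem_filter, hE, hu, h0]
      · have h1 : v s = 1 := by omega
        simp [Finset.mem_sdiff, Finset.mem_filter, hE, hu, h1]
    · rw [if_neg hE] at hs
      have h0 : v s = 0 := by omega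
      simp [Finset.mem_sdiff, hE, h0]

lemma whc_chi_mul (E : Finset (Fin d)) (P Q : MvPolynomial (Fin d × Fin n) k) :
    weightedHomogeneousComponent (pw d n) (chi E) (P * Q) =
    ∑ E1 ∈ E.powerset,
      weightedHomogeneousComponent (pw d n) (chi E1) P *
      weightedHomogeneousComponent (pw d n) (chi (E \ E1)) Q := by
  classical
  ext m
  rw [coeff_weightedHomogeneousComponent, MvPolynomial.coeff_sum]
  simp only [MvPolynomial.coeff_mul, coeff_weightedHomogeneousComponent]
  rw [Finset.sum_comm]
  by_cases hc : Finsupp.weight (pw d n) m = chi E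
  · rw [if_pos hc]
    refine Finset.sum_congr rfl ?_
    intro x hx
    rw [Finset.HasAntidiagonal.mem_antidiagonal] at hx
    have hadd : Finsupp.weight (pw d n) x.1 + Finsupp.weight (pw d n) x.2 = chi E := by
      rw [← map_add, hx, hc]
    obtain ⟨E1₀, hsub, hu, hv⟩ := chi_decomp hadd
    have hz : ∀ E1 ∈ E.powerset, E1 ≠ E1₀ →
        (if Finsupp.weight (pw d n) x.1 = chi E1 then coeff x.1 P else 0) *
        (if Finsupp.weight (pw d n) x.2 = chi (E \ E1) then coeff x.2 Q else 0) = 0 := by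
      intro E1 _ hne
      by_cases h1 : Finsupp.weight (pw d n) x.1 = chi E1
      · exact absurd (chi_injective (h1.symm.trans hu)) hne
      · rw [if_neg h1, zero_mul]
    rw [Finset.sum_eq_single_of_mem E1₀ (Finset.mem_powerset.mpr hsub) hz, if_pos hu, if_pos hv]
  · rw [if_neg hc]
    symm
    refine Finset.sum_eq_zero ?_
    intro x hx
    rw [Finset.HasAntidiagonal.mem_antidiagonal] at hx
    refine Finset.sum_eq_zero ?_
    intro E1 hE1
    by_cases h1 : Finsupp.weight (pw d n) x.1 = chi E1
    · by_cases h2 : Finsupp.weight (pw d n) x.2 = chi (E \ E1)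
      · exfalso
        apply hc
        rw [← hx, map_add, h1, h2, chi_add_sdiff (Finset.mem_powerset.mp hE1)]
      · rw [if_neg h2, mul_zero]
    · rw [if_neg h1, zero_mul]

lemma polarize_mul (E : Finset (Fin d)) (f g : MvPolynomial (Fin n) k) :
    polarize d E (f * g) = ∑ E1 ∈ E.powerset, polarize d E1 f * polarize d (E \ E1) g := by
  simp only [polarize_def]
  rw [map_mul]
  exact whc_chi_mul E _ _

lemma polarize_add (E : Finset (Fin d)) (f g : MvPolynomial (Fin n) k) :
    polarize d E (f + g) = polarize d E f + polarize d E g := by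
  simp only [polarize_def, map_add]

lemma polarize_zero (E : Finset (Fin d)) :
    polarize d E (0 : MvPolynomial (Fin n) k) = 0 := by
  simp only [polarize_def, map_zero]

lemma polarize_sum {ι : Type*} (s : Finset ι) (f : ι → MvPolynomial (Fin n) k)
    (E : Finset (Fin d)) :
    polarize d E (∑ i ∈ s, f i) = ∑ i ∈ s, polarize d E (f i) := by
  simp only [polarize_def, map_sum]

lemma polarize_C_mul (E : Finset (Fin d)) (c : k) (f : MvPolynomial (Fin n) k) :
    polarize d E (C c * f) = C c * polarize d E f := by
  simp only [polarize_def]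
  rw [map_mul, aeval_C, MvPolynomial.algebraMap_eq, weightedHomogeneousComponent_C_mul]

lemma isHomogeneous_aeval_sub {f : MvPolynomial (Fin n) k} {m : ℕ} (hf : f.IsHomogeneous m) :
    (aeval (fun j : Fin n => ∑ s : Fin d, (X (s, j) : MvPolynomial (Fin d × Fin n) k)) f).IsHomogeneous m := by
  have := hf.aeval (fun j : Fin n => ∑ s : Fin d, (X (s, j) : MvPolynomial (Fin d × Fin n) k))
    (fun j => IsHomogeneous.sum _ _ 1 (fun s _ => isHomogeneous_X _ _))
  simpa using this

lemma whc_isHomogeneous {w : Fin d × Fin n → Fin d → ℕ} {c : Fin d → ℕ}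
    {P : MvPolynomial (Fin d × Fin n) k} {m : ℕ} (hP : P.IsHomogeneous m) :
    (weightedHomogeneousComponent w c P).IsHomogeneous m := by
  classical
  intro e he
  apply hP
  rw [coeff_weightedHomogeneousComponent] at he
  by_cases hc : Finsupp.weight w e = c
  · rwa [if_pos hc] at he
  · rw [if_neg hc] at he; exact absurd rfl he

lemma polarize_isHomogeneous {f : MvPolynomial (Fin n) k} {m : ℕ} (hf : f.IsHomogeneous m)
    (E : Finset (Fin d)) : (polarize d E f).IsHomogeneous m := by
  rw [polarize_def]
  exact whc_isHomogeneous (isHomogeneous_aeval_sub hf)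

lemma sum_weight_pw (e : (Fin d × Fin n) →₀ ℕ) :
    ∑ s : Fin d, Finsupp.weight (pw d n) e s = Finsupp.weight (1 : Fin d × Fin n → ℕ) e := by
  rw [Finsupp.weight_apply, Finsupp.weight_apply]
  classical
  simp only [Finsupp.sum, Finset.sum_apply, Pi.smul_apply, pw, smul_eq_mul, Pi.one_apply,
    mul_one]
  rw [Finset.sum_comm]
  apply Finset.sum_congr rfl
  intro p _
  rw [← Finset.mul_sum]
  simp [Pi.single_apply]

lemma sum_chi (E : Finset (Fin d)) : ∑ s : Fin d, chi E s = E.card := by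
  simp only [chi]
  rw [Finset.sum_ite_mem, Finset.univ_inter]
  simp

lemma polarize_eq_zero {f : MvPolynomial (Fin n) k} {m : ℕ} (hf : f.IsHomogeneous m)
    {E : Finset (Fin d)} (hE : E.card ≠ m) : polarize d E f = 0 := by
  classical
  rw [polarize_def]
  apply weightedHomogeneousComponent_eq_zero'
  intro e he hcontra
  apply hE
  have h1 : ∑ s : Fin d, Finsupp.weight (pw d n) e s = ∑ s : Fin d, chi E s := by
    rw [hcontra]
  rw [sum_weight_pw, sum_chi] at h1
  rw [← h1]
  exact isHomogeneous_aeval_sub hf (MvPolynomial.mem_support_iff.mp he)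
lemma SRankLE_polarize {f : MvPolynomial (Fin n) k} {e r : ℕ} (hf : SRankLE f e r)
    (E : Finset (Fin d)) : SRankLE (polarize d E f) e (2 ^ d * r) := by
  classical
  obtain ⟨g, h, hgh, rfl⟩ := hf
  have hcard : Fintype.card (Fin r × Finset (Fin d)) = 2 ^ d * r := by
    simp [mul_comm]
  let eqv : Fin r × Finset (Fin d) ≃ Fin (2 ^ d * r) := Fintype.equivFinOfCardEq hcard
  refine ⟨fun x => if (eqv.symm x).2 ⊆ E then polarize d (eqv.symm x).2 (g (eqv.symm x).1) else 0,
          fun x => if (eqv.symm x).2 ⊆ E then polarize d (E \ (eqv.symm x).2) (h (eqv.symm x).1)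
            else 0, ?_, ?_⟩
  · intro x
    obtain ⟨a, b, ha, hb, hab, hga, hhb⟩ := hgh (eqv.symm x).1
    refine ⟨a, b, ha, hb, hab, ?_, ?_⟩
    · dsimp only
      split_ifs with hsub
      · exact polarize_isHomogeneous hga _
      · exact isHomogeneous_zero _ _ _
    · dsimp only
      split_ifs with hsub
      · exact polarize_isHomogeneous hhb _
      · exact isHomogeneous_zero _ _ _
  · rw [polarize_sum]
    have step1 : ∀ y : Fin r × Finset (Fin d),
        (if (eqv.symm (eqv y)).2 ⊆ E then polarize d (eqv.symm (eqv y)).2 (g (eqv.symm (eqv y)).1) else 0) *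
        (if (eqv.symm (eqv y)).2 ⊆ E then polarize d (E \ (eqv.symm (eqv y)).2) (h (eqv.symm (eqv y)).1) else 0) =
        (if y.2 ⊆ E then polarize d y.2 (g y.1) * polarize d (E \ y.2) (h y.1) else 0) := by
      intro y
      rw [Equiv.symm_apply_apply]
      split_ifs with hsub <;> simp
    rw [← Equiv.sum_comp eqv
      (fun x => (if (eqv.symm x).2 ⊆ E then polarize d (eqv.symm x).2 (g (eqv.symm x).1) else 0) *
        (if (eqv.symm x).2 ⊆ E then polarize d (E \ (eqv.symm x).2) (h (eqv.symm x).1) else 0))]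
    rw [Finset.sum_congr rfl (fun y _ => step1 y)]
    rw [Fintype.sum_prod_type]
    apply Finset.sum_congr rfl
    intro i _
    rw [polarize_mul]
    rw [← Finset.sum_filter]
    apply Finset.sum_congr ?_ (fun _ _ => rfl)
    ext E1
    simp [Finset.mem_powerset]

lemma SRankLE_mono {σ : Type*} {f : MvPolynomial σ k} {e r r' : ℕ} (hf : SRankLE f e r)
    (he : 2 ≤ e) (hrr' : r ≤ r') : SRankLE f e r' := by
  classical
  obtain ⟨g, h, hgh, rfl⟩ := hf
  let N : ℕ → MvPolynomial σ k := fun m => if hx : m < r then g ⟨m, hx⟩ * h ⟨m, hx⟩ else 0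
  refine ⟨fun x => if hx : x.1 < r then g ⟨x.1, hx⟩ else 0,
          fun x => if hx : x.1 < r then h ⟨x.1, hx⟩ else 0, ?_, ?_⟩
  · intro x
    by_cases hx : x.1 < r
    · obtain ⟨a, b, ha, hb, hab, hga, hhb⟩ := hgh ⟨x.1, hx⟩
      exact ⟨a, b, ha, hb, hab, by dsimp only; rw [dif_pos hx]; exact hga,
        by dsimp only; rw [dif_pos hx]; exact hhb⟩
    · exact ⟨1, e - 1, one_pos, by omega, by omega,
        by dsimp only; rw [dif_neg hx]; exact isHomogeneous_zero _ _ _,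
        by dsimp only; rw [dif_neg hx]; exact isHomogeneous_zero _ _ _⟩
  · have key : ∀ x : Fin r', (if hx : x.1 < r then g ⟨x.1, hx⟩ else 0) *
        (if hx : x.1 < r then h ⟨x.1, hx⟩ else 0) = N x.1 := by
      intro x
      dsimp only [N]
      by_cases hx : x.1 < r
      · rw [dif_pos hx, dif_pos hx, dif_pos hx]
      · rw [dif_neg hx, dif_neg hx, dif_neg hx, zero_mul]
    rw [Finset.sum_congr rfl (fun x _ => key x)]
    rw [Fin.sum_univ_eq_sum_range N r']
    rw [← Finset.sum_subset (Finset.range_subset_range.mpr hrr')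
      (fun x _ hx => by simp only [N]; rw [dif_neg (by simpa using hx)])]
    rw [← Fin.sum_univ_eq_sum_range N r]
    apply Finset.sum_congr rfl
    intro x _
    dsimp only [N]
    rw [dif_pos x.isLt]

lemma SRankLE_zero_eq {σ : Type*} {f : MvPolynomial σ k} {e : ℕ} (hf : SRankLE f e 0) :
    f = 0 := by
  obtain ⟨g, h, _, rfl⟩ := hf
  simp

lemma polarize_mem_span {h : ℕ} {deg sz : Fin h → ℕ}
    (F : (i : Fin h) → Fin (sz i) → MvPolynomial (Fin n) k)
    (hhom : ∀ i j, (F i j).IsHomogeneous (deg i)) (i : Fin h) {q : MvPolynomial (Fin n) k}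
    (hq : q ∈ Ideal.span {p | ∃ (i' : Fin h) (j : Fin (sz i')), i' < i ∧ p = F i' j})
    (E : Finset (Fin d)) :
    polarize d E q ∈ Ideal.span {p : MvPolynomial (Fin d × Fin n) k |
      ∃ (i' : Fin h) (j : Fin (sz i') × {E : Finset (Fin d) // E.card = deg i'}),
        i' < i ∧ p = polarize d j.2.1 (F i' j.1)} := by
  revert E
  refine Submodule.span_induction
    (p := fun x _ => ∀ E : Finset (Fin d), polarize d E x ∈ Ideal.span {p : MvPolynomial (Fin d × Fin n) k |
      ∃ (i' : Fin h) (j : Fin (sz i') × {E : Finset (Fin d) // E.card = deg i'}),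
        i' < i ∧ p = polarize d j.2.1 (F i' j.1)}) ?_ ?_ ?_ ?_ hq
  · rintro x ⟨i', j, hlt, rfl⟩ E
    by_cases hcard : E.card = deg i'
    · exact Ideal.subset_span ⟨i', (j, ⟨E, hcard⟩), hlt, rfl⟩
    · rw [polarize_eq_zero (hhom i' j) hcard]
      exact zero_mem _
  · intro E
    rw [polarize_zero]
    exact zero_mem _
  · intro x y _ _ hx hy E
    rw [polarize_add]
    exact add_mem (hx E) (hy E)
  · intro c x _ hx E
    rw [smul_eq_mul, polarize_mul]
    exact sum_mem fun E1 _ => Ideal.mul_mem_left _ _ (hx (E \ E1))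

end PolarizeAux

open PolarizeAux in
theorem tower_regular_of_polarized_regular {k : Type*} [Field k] {n h d : ℕ}
    (deg sz : Fin h → ℕ)
    (F : (i : Fin h) → Fin (sz i) → MvPolynomial (Fin n) k)
    (hhom : ∀ i j, (F i j).IsHomogeneous (deg i))
    (hle : ∀ i, deg i ≤ d) (hmax : ∃ i, deg i = d)
    (A B t : ℕ)
    (hpol : TowerRegular
      (fun i => Fin (sz i) × {E : Finset (Fin d) // E.card = deg i}) deg
      (fun i p => polarize d p.2.1 (F i p.1)) (2 ^ d * A) B t) :
    TowerRegular (fun i => Fin (sz i)) deg F A B t := by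
  intro i a ha hc
  obtain ⟨q, hqI, hqhom, hq⟩ := hc
  have hszi : sz i ≠ 0 := fun h0 => ha (funext fun x => absurd x.isLt (by omega))
  obtain ⟨E₀, hE₀sub, hE₀card⟩ := Finset.exists_subset_card_eq
    (s := (Finset.univ : Finset (Fin d))) (n := deg i) (by simpa using hle i)
  set v : {E : Finset (Fin d) // E.card = deg i} := ⟨E₀, hE₀card⟩ with hv
  set a' : (Fin (sz i) × {E : Finset (Fin d) // E.card = deg i}) → k :=
    (fun p => if p.2 = v then a p.1 else 0) with ha'def
  have ha' : a' ≠ 0 := by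
    obtain ⟨j, hj⟩ := Function.ne_iff.mp ha
    intro h0
    apply hj
    have := congrFun h0 (j, v)
    simpa [ha'def] using this
  apply hpol i a' ha'
  have hsum : (∑ p : Fin (sz i) × {E : Finset (Fin d) // E.card = deg i},
      C (a' p) * polarize d p.2.1 (F i p.1)) = polarize d E₀ (∑ j, C (a j) * F i j) := by
    rw [polarize_sum, Fintype.sum_prod_type]
    apply Finset.sum_congr rfl
    intro j _
    have hterm : ∀ (e : {E : Finset (Fin d) // E.card = deg i}),
        C (a' (j, e)) * polarize d e.1 (F i j) =
        if e = v then C (a j) * polarize d e.1 (F i j) else 0 := by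
      intro e
      simp only [ha'def]
      split_ifs with hE
      · rfl
      · rw [map_zero, zero_mul]
    rw [Finset.sum_congr rfl (fun e _ => hterm e),
      Finset.sum_ite_eq' Finset.univ v (fun e => C (a j) * polarize d e.1 (F i j)),
      if_pos (Finset.mem_univ v), polarize_C_mul]
  refine ⟨polarize d E₀ q, ?_, polarize_isHomogeneous hqhom E₀, ?_⟩
  · exact polarize_mem_span F hhom i hqI E₀
  · dsimp only
    rw [hsum, ← polarize_add]
    have h1 := SRankLE_polarize (d := d) hq E₀
    set M := (∑ i' ∈ Finset.univ.filter (fun i' => i ≤ i'),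
      Fintype.card (Fin (sz i'))) with hM
    rcases Nat.eq_zero_or_pos (A * (M + t) ^ B) with hr0 | hrpos
    · have hMpos : 0 < M := by
        have hmem : i ∈ Finset.univ.filter (fun i' => i ≤ i') := by
          simp [Finset.mem_filter]
        have hle1 : Fintype.card (Fin (sz i)) ≤ M :=
          Finset.single_le_sum (f := fun i' => Fintype.card (Fin (sz i')))
            (fun _ _ => Nat.zero_le _) hmem
        have : 0 < Fintype.card (Fin (sz i)) := by simpa using Nat.pos_of_ne_zero hszi
        omega
      have hA : A = 0 := by
        rcases Nat.mul_eq_zero.mp hr0 with hA | hp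
        · exact hA
        · exfalso
          have := pow_eq_zero_iff (n := B) (by rintro rfl; simp at hp) |>.mp hp
          omega
      simpa [hA] using h1
    · have hdeg2 : 2 ≤ deg i := by
        obtain ⟨g0, h0, hgh0, _⟩ := hq
        obtain ⟨a1, b1, ha1, hb1, hab1, _, _⟩ := hgh0 ⟨0, hrpos⟩
        omega
      apply SRankLE_mono h1 hdeg2
      have hMM' : M ≤ ∑ i' ∈ Finset.univ.filter (fun i' => i ≤ i'),
          Fintype.card (Fin (sz i') × {E : Finset (Fin d) // E.card = deg i'}) := by
        apply Finset.sum_le_sum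
        intro i' _
        have hpos : 0 < Fintype.card {E : Finset (Fin d) // E.card = deg i'} := by
          apply Fintype.card_pos_iff.mpr
          obtain ⟨E', _, hE'⟩ := Finset.exists_subset_card_eq
            (s := (Finset.univ : Finset (Fin d))) (n := deg i') (by simpa using hle i')
          exact ⟨⟨E', hE'⟩⟩
        rw [Fintype.card_prod]
        exact Nat.le_mul_of_pos_right _ hpos
      calc 2 ^ d * (A * (M + t) ^ B) = 2 ^ d * A * (M + t) ^ B := (mul_assoc _ _ _).symm
        _ ≤ 2 ^ d * A * ((∑ i' ∈ Finset.univ.filter (fun i' => i ≤ i'),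
              Fintype.card (Fin (sz i') × {E : Finset (Fin d) // E.card = deg i'})) + t) ^ B :=
          Nat.mul_le_mul_left _ (Nat.pow_le_pow_left (by omega) B)
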